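/- arXiv:1904.03600 — 5 statements merged into one kernel-verified Lean document; each statement's English description precedes it below -/
import Mathlib

section
/- Let C₁ and C₂ be submodules of ℤ₄ⁿ and let C = vC₁ ⊕ (1-v)C₂ ⊆ Rⁿ where R = ℤ₄[v]/(v²-v). Then C is invariant under the cyclic shift on Rⁿ if and only if both C₁ and C₂ are invariant under the cyclic shift on ℤ₄ⁿ. -/
open Polynomial

/-- The ring `R = ℤ₄[v]/(v² - v)`. -/
abbrev R4v : Type :=
  Polynomial (ZMod 4) ⧸ Ideal.span ({X ^ 2 - X} : Set (Polynomial (ZMod 4)))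

/-- The image of `v` in `R4v`. -/
noncomputable def vR : R4v :=
  Ideal.Quotient.mk (Ideal.span ({X ^ 2 - X} : Set (Polynomial (ZMod 4)))) X

/-- The embedding `ℤ₄ → R`. -/
noncomputable def ιR : ZMod 4 →+* R4v :=
  (Ideal.Quotient.mk (Ideal.span ({X ^ 2 - X} : Set (Polynomial (ZMod 4))))).comp
    (Polynomial.C : ZMod 4 →+* Polynomial (ZMod 4))

/-- The cyclic shift `ρ(c₀, …, c_{n-1}) = (c_{n-1}, c₀, …, c_{n-2})`. -/
def cycShift {α : Type*} {n : ℕ} [NeZero n] (c : Fin n → α) : Fin n → α :=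
  fun i => c (i - 1)

/-- The code `v C₁ ⊕ (1-v) C₂ ⊆ Rⁿ` built from two `ℤ₄`-codes. -/
noncomputable def mixCode {n : ℕ} (A B : Set (Fin n → ZMod 4)) : Set (Fin n → R4v) :=
  {x | ∃ c₁ ∈ A, ∃ c₂ ∈ B, x = fun i => vR * ιR (c₁ i) + (1 - vR) * ιR (c₂ i)}

noncomputable def evR (c : ZMod 4) (hc : c ^ 2 = c) : R4v →+* ZMod 4 :=
  Ideal.Quotient.lift _ (evalRingHom c) (by
    intro a ha
    rw [Ideal.mem_span_singleton] at ha
    obtain ⟨q, rfl⟩ := ha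
    simp [hc])

lemma evR_v (c : ZMod 4) (hc : c ^ 2 = c) : evR c hc vR = c := by
  simp [evR, vR]

lemma evR_ι (c : ZMod 4) (hc : c ^ 2 = c) (a : ZMod 4) : evR c hc (ιR a) = a := by
  simp [evR, ιR]

noncomputable def mixF {n : ℕ} (a b : Fin n → ZMod 4) : Fin n → R4v :=
  fun i => vR * ιR (a i) + (1 - vR) * ιR (b i)

lemma mixF_inj {n : ℕ} {a b a' b' : Fin n → ZMod 4}
    (h : mixF a b = mixF a' b') : a = a' ∧ b = b' := by
  have h1 : (1 : ZMod 4) ^ 2 = 1 := by norm_num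
  have h0 : (0 : ZMod 4) ^ 2 = 0 := by norm_num
  constructor <;> funext i <;> have := congrFun h i
  · have := congrArg (evR 1 h1) this
    simpa [mixF, evR_v, evR_ι] using this
  · have := congrArg (evR 0 h0) this
    simpa [mixF, evR_v, evR_ι] using this

lemma cycShift_mixF {n : ℕ} [NeZero n] (a b : Fin n → ZMod 4) :
    cycShift (mixF a b) = mixF (cycShift a) (cycShift b) := rfl

lemma mem_mixCode {n : ℕ} {A B : Set (Fin n → ZMod 4)} {x : Fin n → R4v} :
    x ∈ mixCode A B ↔ ∃ a ∈ A, ∃ b ∈ B, x = mixF a b := Iff.rfl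

theorem stmt9 (n : ℕ) [NeZero n]
    (C₁ C₂ : Submodule (ZMod 4) (Fin n → ZMod 4)) :
    cycShift '' mixCode (C₁ : Set (Fin n → ZMod 4)) (C₂ : Set (Fin n → ZMod 4))
        = mixCode (C₁ : Set (Fin n → ZMod 4)) (C₂ : Set (Fin n → ZMod 4)) ↔
      (cycShift '' (C₁ : Set (Fin n → ZMod 4)) = (C₁ : Set (Fin n → ZMod 4)) ∧
        cycShift '' (C₂ : Set (Fin n → ZMod 4)) = (C₂ : Set (Fin n → ZMod 4))) := by
  constructor
  · intro h
    constructor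
    · apply Set.eq_of_subset_of_subset
      · rintro _ ⟨a, ha, rfl⟩
        have hx : mixF a 0 ∈ mixCode (C₁ : Set _) (C₂ : Set _) :=
          ⟨a, ha, 0, C₂.zero_mem, rfl⟩
        have : cycShift (mixF a 0) ∈ mixCode (C₁ : Set _) (C₂ : Set _) := by
          rw [← h]; exact ⟨_, hx, rfl⟩
        obtain ⟨a', ha', b', hb', heq⟩ := this
        rw [cycShift_mixF] at heq
        have := mixF_inj heq
        rw [this.1]; exact ha'
      · intro a ha
        have hx : mixF a 0 ∈ mixCode (C₁ : Set _) (C₂ : Set _) :=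
          ⟨a, ha, 0, C₂.zero_mem, rfl⟩
        rw [← h] at hx
        obtain ⟨y, ⟨a', ha', b', hb', rfl⟩, heq⟩ := hx
        have := mixF_inj (show mixF (cycShift a') (cycShift b') = mixF a 0 from heq).symm
        exact ⟨a', ha', this.1.symm⟩
    · apply Set.eq_of_subset_of_subset
      · rintro _ ⟨b, hb, rfl⟩
        have hx : mixF 0 b ∈ mixCode (C₁ : Set _) (C₂ : Set _) :=
          ⟨0, C₁.zero_mem, b, hb, rfl⟩
        have : cycShift (mixF 0 b) ∈ mixCode (C₁ : Set _) (C₂ : Set _) := by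
          rw [← h]; exact ⟨_, hx, rfl⟩
        obtain ⟨a', ha', b', hb', heq⟩ := this
        rw [cycShift_mixF] at heq
        have := mixF_inj heq
        rw [this.2]; exact hb'
      · intro b hb
        have hx : mixF 0 b ∈ mixCode (C₁ : Set _) (C₂ : Set _) :=
          ⟨0, C₁.zero_mem, b, hb, rfl⟩
        rw [← h] at hx
        obtain ⟨y, ⟨a', ha', b', hb', rfl⟩, heq⟩ := hx
        have := mixF_inj (show mixF (cycShift a') (cycShift b') = mixF 0 b from heq).symm
        exact ⟨b', hb', this.2.symm⟩
  · rintro ⟨h1, h2⟩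
    apply Set.eq_of_subset_of_subset
    · rintro _ ⟨x, ⟨a, ha, b, hb, rfl⟩, rfl⟩
      refine ⟨cycShift a, ?_, cycShift b, ?_, rfl⟩
      · rw [← h1]; exact ⟨a, ha, rfl⟩
      · rw [← h2]; exact ⟨b, hb, rfl⟩
    · rintro _ ⟨a, ha, b, hb, rfl⟩
      rw [← h1] at ha; rw [← h2] at hb
      obtain ⟨a', ha', rfl⟩ := ha
      obtain ⟨b', hb', rfl⟩ := hb
      exact ⟨mixF a' b', ⟨a', ha', b', hb', rfl⟩, rfl⟩
end

section
/- Let C = vC₁ ⊕ (1-v)C₂ be a linear code of length n over R = ℤ₄[v]/(v²-v), where C₁, C₂ are linear codes over ℤ₄. Then the dual code satisfies C^⊥ = vC₁^⊥ ⊕ (1-v)C₂^⊥. -/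
open Polynomial

/-- The dual of a code under the standard inner product `h·k = Σᵢ hᵢ kᵢ`. -/
def dualCode {S : Type*} [CommRing S] {n : ℕ} (D : Set (Fin n → S)) : Set (Fin n → S) :=
  {h | ∀ k ∈ D, ∑ i, h i * k i = 0}

noncomputable def ev0 : R4v →+* ZMod 4 :=
  Ideal.Quotient.lift _ (evalRingHom 0) (fun p hp => by
    rw [Ideal.mem_span_singleton] at hp
    obtain ⟨q, rfl⟩ := hp
    simp)

noncomputable def ev1 : R4v →+* ZMod 4 :=
  Ideal.Quotient.lift _ (evalRingHom 1) (fun p hp => by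
    rw [Ideal.mem_span_singleton] at hp
    obtain ⟨q, rfl⟩ := hp
    simp)

@[simp] lemma ev0_ι (a : ZMod 4) : ev0 (ιR a) = a := by
  simp [ev0, ιR]

@[simp] lemma ev1_ι (a : ZMod 4) : ev1 (ιR a) = a := by
  simp [ev1, ιR]

@[simp] lemma ev0_v : ev0 vR = 0 := by simp [ev0, vR]

@[simp] lemma ev1_v : ev1 vR = 1 := by simp [ev1, vR]

lemma v_idem : vR * vR = vR := by
  rw [← sub_eq_zero]
  show (Ideal.Quotient.mk _ X * Ideal.Quotient.mk _ X - Ideal.Quotient.mk _ X : R4v) = 0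
  rw [← map_mul, ← map_sub, Ideal.Quotient.eq_zero_iff_mem]
  have : (X * X - X : Polynomial (ZMod 4)) = X ^ 2 - X := by ring
  rw [this]
  exact Ideal.subset_span rfl

lemma dvd_of_roots (g : Polynomial (ZMod 4)) (h0 : g.eval 0 = 0) (h1 : g.eval 1 = 0) :
    (X^2 - X) ∣ g := by
  have hx : (X : Polynomial (ZMod 4)) ∣ g := by
    simpa using (dvd_iff_isRoot.mpr h0 : (X - C 0) ∣ g)
  obtain ⟨h, rfl⟩ := hx
  have h1' : h.eval 1 = 0 := by simpa using h1
  obtain ⟨k, rfl⟩ := (dvd_iff_isRoot.mpr h1' : (X - C 1) ∣ h)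
  exact ⟨k, by rw [C_1]; ring⟩

lemma decomp (x : R4v) : x = vR * ιR (ev1 x) + (1 - vR) * ιR (ev0 x) := by
  obtain ⟨p, rfl⟩ := Ideal.Quotient.mk_surjective x
  have hev1 : ev1 (Ideal.Quotient.mk _ p) = p.eval 1 := by simp [ev1]
  have hev0 : ev0 (Ideal.Quotient.mk _ p) = p.eval 0 := by simp [ev0]
  rw [hev1, hev0]
  have : vR * ιR (p.eval 1) + (1 - vR) * ιR (p.eval 0)
      = Ideal.Quotient.mk _ (X * C (p.eval 1) + (1 - X) * C (p.eval 0)) := by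
    rw [map_add, map_mul, map_mul, map_sub, map_one]
    rfl
  rw [this]
  refine (Ideal.Quotient.eq.mpr ?_)
  rw [Ideal.mem_span_singleton]
  exact dvd_of_roots _ (by simp) (by simp)

lemma mul_decomp (a b c d : ZMod 4) :
    (vR * ιR a + (1 - vR) * ιR b) * (vR * ιR c + (1 - vR) * ιR d)
      = vR * ιR (a * c) + (1 - vR) * ιR (b * d) := by
  rw [map_mul, map_mul]
  linear_combination (ιR a * ιR c - ιR a * ιR d - ιR b * ιR c + ιR b * ιR d) * v_idem

theorem stmt10 (n : ℕ) (C₁ C₂ : Submodule (ZMod 4) (Fin n → ZMod 4)) :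
    dualCode (mixCode (C₁ : Set (Fin n → ZMod 4)) (C₂ : Set (Fin n → ZMod 4)))
      = mixCode (dualCode (C₁ : Set (Fin n → ZMod 4)))
          (dualCode (C₂ : Set (Fin n → ZMod 4))) := by
  ext h
  constructor
  · intro hh
    refine ⟨fun i => ev1 (h i), ?_, fun i => ev0 (h i), ?_, funext fun i => decomp (h i)⟩
    · intro c₁ hc₁
      have h0 := hh (fun i => vR * ιR (c₁ i) + (1 - vR) * ιR ((0 : Fin n → ZMod 4) i))
        ⟨c₁, hc₁, 0, C₂.zero_mem, rfl⟩
      have := congrArg ev1 h0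
      simpa [map_sum] using this
    · intro c₂ hc₂
      have h0 := hh (fun i => vR * ιR ((0 : Fin n → ZMod 4) i) + (1 - vR) * ιR (c₂ i))
        ⟨0, C₁.zero_mem, c₂, hc₂, rfl⟩
      have := congrArg ev0 h0
      simpa [map_sum] using this
  · rintro ⟨a, ha, b, hb, rfl⟩ k ⟨c₁, hc₁, c₂, hc₂, rfl⟩
    have : ∑ i, (vR * ιR (a i) + (1 - vR) * ιR (b i)) * (vR * ιR (c₁ i) + (1 - vR) * ιR (c₂ i))
        = vR * ιR (∑ i, a i * c₁ i) + (1 - vR) * ιR (∑ i, b i * c₂ i) := by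
      simp only [mul_decomp, map_sum, Finset.mul_sum, Finset.sum_add_distrib]
    rw [this, ha c₁ hc₁, hb c₂ hc₂]
    simp
end

section
/- Let C = vC₁ ⊕ (1-v)C₂ be a linear code over R = ℤ₄[v]/(v²-v) with C₁, C₂ linear codes over ℤ₄. Then Hull(C) = v·Hull(C₁) ⊕ (1-v)·Hull(C₂), where Hull(D) := D ∩ D^⊥. -/
open Polynomial

/-- The hull `Hull(D) = D ∩ D^⊥`. -/
def hullCode {S : Type*} [CommRing S] {n : ℕ} (D : Set (Fin n → S)) : Set (Fin n → S) :=
  D ∩ dualCode D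

noncomputable def e0 : R4v →+* ZMod 4 :=
  Ideal.Quotient.lift _ (evalRingHom (0 : ZMod 4)) (by
    intro a ha
    rw [Ideal.mem_span_singleton] at ha
    obtain ⟨q, rfl⟩ := ha
    simp)

noncomputable def e1 : R4v →+* ZMod 4 :=
  Ideal.Quotient.lift _ (evalRingHom (1 : ZMod 4)) (by
    intro a ha
    rw [Ideal.mem_span_singleton] at ha
    obtain ⟨q, rfl⟩ := ha
    simp)

lemma e0_v : e0 vR = 0 := by simp [e0, vR]
lemma e1_v : e1 vR = 1 := by simp [e1, vR]
lemma e0_ι (a : ZMod 4) : e0 (ιR a) = a := by simp [e0, ιR]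
lemma e1_ι (a : ZMod 4) : e1 (ιR a) = a := by simp [e1, ιR]

lemma mix_mul (A B C D : R4v) :
    (vR * A + (1 - vR) * B) * (vR * C + (1 - vR) * D)
      = vR * (A * C) + (1 - vR) * (B * D) := by
  have hv := v_idem
  linear_combination (A * C - A * D - B * C + B * D) * hv

lemma sum_mix {n : ℕ} (c₁ c₂ d₁ d₂ : Fin n → ZMod 4) :
    ∑ i, (vR * ιR (c₁ i) + (1 - vR) * ιR (c₂ i)) * (vR * ιR (d₁ i) + (1 - vR) * ιR (d₂ i))
      = vR * ιR (∑ i, c₁ i * d₁ i) + (1 - vR) * ιR (∑ i, c₂ i * d₂ i) := by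
  rw [map_sum, map_sum, Finset.mul_sum, Finset.mul_sum, ← Finset.sum_add_distrib]
  exact Finset.sum_congr rfl fun i _ => by rw [mix_mul, ← map_mul, ← map_mul]

lemma mix_eq_zero {a b : ZMod 4} (h : vR * ιR a + (1 - vR) * ιR b = 0) : a = 0 ∧ b = 0 := by
  constructor
  · have := congrArg e1 h
    simpa [e1_v, e1_ι] using this
  · have := congrArg e0 h
    simpa [e0_v, e0_ι] using this

theorem stmt11 (n : ℕ) (C₁ C₂ : Submodule (ZMod 4) (Fin n → ZMod 4)) :
    hullCode (mixCode (C₁ : Set (Fin n → ZMod 4)) (C₂ : Set (Fin n → ZMod 4)))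
      = mixCode (hullCode (C₁ : Set (Fin n → ZMod 4)))
          (hullCode (C₂ : Set (Fin n → ZMod 4))) := by
  ext x
  constructor
  · rintro ⟨⟨c₁, hc₁, c₂, hc₂, rfl⟩, hd⟩
    refine ⟨c₁, ⟨hc₁, ?_⟩, c₂, ⟨hc₂, ?_⟩, rfl⟩
    · intro d₁ hd₁
      have h := hd _ ⟨d₁, hd₁, 0, C₂.zero_mem, rfl⟩
      rw [sum_mix] at h
      exact (mix_eq_zero h).1
    · intro d₂ hd₂
      have h := hd _ ⟨0, C₁.zero_mem, d₂, hd₂, rfl⟩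
      rw [sum_mix] at h
      exact (mix_eq_zero h).2
  · rintro ⟨c₁, ⟨hc₁, hc₁'⟩, c₂, ⟨hc₂, hc₂'⟩, rfl⟩
    refine ⟨⟨c₁, hc₁, c₂, hc₂, rfl⟩, ?_⟩
    rintro k ⟨d₁, hd₁, d₂, hd₂, rfl⟩
    rw [sum_mix, hc₁' d₁ hd₁, hc₂' d₂ hd₂]
    simp
end

section
/- Let ξ : Rⁿ → ℤ₄^{2n} be the coordinatewise Gray map given by ξ(a+bv) = (a, 2b+a) in interleaved coordinates as in the paper (so that the image of the i-th R-coordinate occupies positions i and n+i appropriately). Then for every k ∈ Rⁿ, ξ(ρ(k)) = ρ²(ξ(k)), where ρ denotes the cyclic shift on each module. -/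
instance twoMulNeZero (n : ℕ) [NeZero n] : NeZero (2 * n) :=
  ⟨by have := NeZero.ne n; omega⟩

/-- The interleaved Gray map `ξ : Rⁿ → ℤ₄^{2n}`, where an element `a + b v` of
`R = ℤ₄[v]/(v²-v)` is represented by the pair `(a, b)`:
`ξ(c₀, …, c_{n-1}) = (a₀, 2b₀+a₀, a₁, 2b₁+a₁, …, a_{n-1}, 2b_{n-1}+a_{n-1})`. -/
def grayMap {n : ℕ} (k : Fin n → ZMod 4 × ZMod 4) : Fin (2 * n) → ZMod 4 :=
  fun j =>
    if j.val % 2 = 0 then (k ⟨j.val / 2, by have := j.isLt; omega⟩).1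
    else 2 * (k ⟨j.val / 2, by have := j.isLt; omega⟩).2
      + (k ⟨j.val / 2, by have := j.isLt; omega⟩).1

theorem stmt12 (n : ℕ) [NeZero n] (k : Fin n → ZMod 4 × ZMod 4) :
    grayMap (cycShift k) = cycShift (cycShift (grayMap k)) := by
  have hn := NeZero.ne n
  have h2n : 2 ≤ 2 * n := by omega
  funext j
  -- value of (a - 1) in Fin (2*n)
  have hsub : ∀ a : Fin (2*n), ((a - 1 : Fin (2*n)) : ℕ) = (2*n - 1 + a.val) % (2*n) := by
    intro a
    rw [Fin.sub_def]
    simp [Fin.val_one', Nat.mod_eq_of_lt h2n]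
  have hm : ((j - 1 - 1 : Fin (2*n)) : ℕ) = (2*n - 2 + j.val) % (2*n) := by
    rw [hsub, hsub, Nat.add_mod_mod]
    have : 2*n - 1 + (2*n - 1 + j.val) = (2*n - 2 + j.val) + 2*n := by omega
    rw [this, Nat.add_mod_right]
  have hj := j.isLt
  have hm' : (j.val ≥ 2 ∧ ((j - 1 - 1 : Fin (2*n)) : ℕ) = j.val - 2) ∨
      (j.val < 2 ∧ ((j - 1 - 1 : Fin (2*n)) : ℕ) = j.val + 2*n - 2) := by
    rcases Nat.lt_or_ge j.val 2 with h | h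
    · right; refine ⟨h, ?_⟩
      rw [hm, Nat.mod_eq_of_lt (by omega)]; omega
    · left; refine ⟨h, ?_⟩
      rw [hm]
      have : 2*n - 2 + j.val = (j.val - 2) + 2*n := by omega
      rw [this, Nat.add_mod_right, Nat.mod_eq_of_lt (by omega)]
  set m : Fin (2*n) := j - 1 - 1 with hmdef
  -- the Fin n index equality
  have hidx : ((⟨j.val / 2, by omega⟩ : Fin n) - 1 : Fin n) =
      (⟨(m : ℕ) / 2, by have := m.isLt; omega⟩ : Fin n) := by
    apply Fin.ext
    rw [Fin.sub_def]
    simp only [Fin.val_one']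
    rcases Nat.eq_or_lt_of_le (Nat.one_le_iff_ne_zero.mpr hn) with h1 | h1
    · -- n = 1
      have hn1 : n = 1 := h1.symm
      subst hn1
      simp
      omega
    · rw [Nat.mod_eq_of_lt h1]
      rcases Nat.eq_zero_or_pos (j.val / 2) with h0 | h0
      · rw [h0, Nat.add_zero, Nat.mod_eq_of_lt (by omega)]
        omega
      · have : n - 1 + j.val / 2 = (j.val / 2 - 1) + n := by omega
        rw [this, Nat.add_mod_right, Nat.mod_eq_of_lt (by omega)]
        omega
  have hpar : (m : ℕ) % 2 = j.val % 2 := by omega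
  show grayMap (cycShift k) j = grayMap k m
  simp only [grayMap, cycShift, hpar, hidx]
end

section
/- If C is a cyclic code of length n over R = ℤ₄[v]/(v²-v), then its Gray image ξ(C) ⊆ ℤ₄^{2n} is a 2-quasi-cyclic code, i.e., ξ(C) is invariant under the square of the cyclic shift on ℤ₄^{2n}. -/
/-- Multiplication in `R = ℤ₄[v]/(v²-v)` in the coordinates `(a, b) ↔ a + b v`:
`(a+bv)(c+dv) = ac + (ad+bc+bd)v`. -/
def Rmul (r x : ZMod 4 × ZMod 4) : ZMod 4 × ZMod 4 :=
  (r.1 * x.1, r.1 * x.2 + r.2 * x.1 + r.2 * x.2)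

lemma key {n : ℕ} [NeZero n] (k : Fin n → ZMod 4 × ZMod 4) :
    cycShift (cycShift (grayMap k)) = grayMap (cycShift k) := by
  have hn : 1 ≤ n := Nat.pos_of_ne_zero (NeZero.ne n)
  funext j
  obtain ⟨x, hx⟩ := j
  have hm : ((⟨x, hx⟩ - 1 - 1 : Fin (2 * n))).val = if x < 2 then x + 2 * n - 2 else x - 2 := by
    simp only [Fin.sub_def, Fin.val_one', Fin.val_mk]
    have h1 : (1 : ℕ) % (2 * n) = 1 := Nat.mod_eq_of_lt (by omega)
    rw [h1, Nat.add_mod_mod]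
    rcases Nat.lt_or_ge x 2 with h | h
    · have he : 2 * n - 1 + (2 * n - 1 + x) = (x + 2 * n - 2) + 2 * n := by omega
      rw [he, Nat.add_mod_right, if_pos h, Nat.mod_eq_of_lt (by omega)]
    · have he : 2 * n - 1 + (2 * n - 1 + x) = (x - 2) + 2 * n + 2 * n := by omega
      rw [he, Nat.add_mod_right, Nat.add_mod_right,
        if_neg (by omega), Nat.mod_eq_of_lt (by omega)]
  have hpar : ((⟨x, hx⟩ - 1 - 1 : Fin (2 * n))).val % 2 = x % 2 := by
    rcases Nat.lt_or_ge x 2 with h | h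
    · rw [if_pos h] at hm; omega
    · rw [if_neg (by omega)] at hm; omega
  have hfin : ∀ (h1 : ((⟨x, hx⟩ - 1 - 1 : Fin (2 * n))).val / 2 < n) (h2 : x / 2 < n),
      (⟨((⟨x, hx⟩ - 1 - 1 : Fin (2 * n))).val / 2, h1⟩ : Fin n) = ⟨x / 2, h2⟩ - 1 := by
    intro h1 h2
    apply Fin.ext
    show ((⟨x, hx⟩ - 1 - 1 : Fin (2 * n))).val / 2 = ((⟨x / 2, h2⟩ : Fin n) - 1).val
    rw [hm]
    simp only [Fin.sub_def, Fin.val_one', Fin.val_mk]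
    rcases eq_or_ne n 1 with hn1 | hn1
    · subst hn1
      rw [if_pos (by omega : x < 2)]
      omega
    · have h1' : (1 : ℕ) % n = 1 := Nat.mod_eq_of_lt (by omega)
      rw [h1']
      rcases Nat.lt_or_ge x 2 with h | h
      · rw [if_pos h]
        have he : n - 1 + x / 2 = n - 1 := by omega
        rw [he, Nat.mod_eq_of_lt (by omega)]
        omega
      · rw [if_neg (by omega)]
        have hx2 : 1 ≤ x / 2 := by omega
        have hx2' : x / 2 ≤ n - 1 := by omega
        have he : n - 1 + x / 2 = (x / 2 - 1) + n := by omega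
        rw [he, Nat.add_mod_right, Nat.mod_eq_of_lt (by omega)]
        omega
  simp only [cycShift, grayMap, hpar]
  rw [hfin]

theorem stmt13 (n : ℕ) [NeZero n] (C : Set (Fin n → ZMod 4 × ZMod 4))
    (hzero : (0 : Fin n → ZMod 4 × ZMod 4) ∈ C)
    (hadd : ∀ x ∈ C, ∀ y ∈ C, x + y ∈ C)
    (hsmul : ∀ r : ZMod 4 × ZMod 4, ∀ x ∈ C, (fun i => Rmul r (x i)) ∈ C)
    (hcyc : cycShift '' C = C) :
    cycShift '' (cycShift '' (grayMap '' C)) = grayMap '' C := by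
  calc cycShift '' (cycShift '' (grayMap '' C))
      = (fun c => cycShift (cycShift (grayMap c))) '' C := by
        rw [Set.image_image, Set.image_image]
    _ = (fun c => grayMap (cycShift c)) '' C := Set.image_congr' (fun c => key c)
    _ = grayMap '' (cycShift '' C) := (Set.image_image _ _ _).symm
    _ = grayMap '' C := by rw [hcyc]
end
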